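/- Let X be a reflexive Banach space compactly embedded in L^1(Ω), f : X → ℝ ∪ {+∞} proper, lower semicontinuous, convex, bounded from below and coercive, and suppose there exists u_0 ∈ X with f(u_0) < ∞ and ‖u_0‖_0 ≤ K, where K ∈ (0, μ(Ω)). Then the problem min_{u ∈ X} f(u) subject to ‖u‖_0 ≤ K admits a global solution. -/

import Mathlib

open MeasureTheory Set Filter
open scoped ENNReal Topology

section Stmt17Aux

open NormedSpace Metric

/-- Reinterpret a set in a normed space as a set in the weak space. -/
def stmt17wset {X : Type*} [NormedAddCommGroup X] [NormedSpace ℝ X] (s : Set X) :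
    Set (WeakSpace ℝ X) := s

/-- Reinterpret a point of the weak space in the original normed space. -/
def stmt17unweak {X : Type*} [NormedAddCommGroup X] [NormedSpace ℝ X] (x : WeakSpace ℝ X) : X := x

theorem stmt17mem_wset {X : Type*} [NormedAddCommGroup X] [NormedSpace ℝ X] {s : Set X}
    {x : WeakSpace ℝ X} : x ∈ stmt17wset s ↔ stmt17unweak x ∈ s := Iff.rfl

theorem stmt17weakspace_t2 {X : Type*} [NormedAddCommGroup X] [NormedSpace ℝ X] :
    T2Space (WeakSpace ℝ X) := by
  have : Function.Injective (topDualPairing ℝ X).flip := by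
    intro x y h
    refine (NormedSpace.eq_iff_forall_dual_eq ℝ).2 fun g => ?_
    exact congrFun (congrArg DFunLike.coe h) g
  exact (WeakBilin.isEmbedding this).t2Space

theorem stmt17wset_image {X : Type*} [NormedAddCommGroup X] [NormedSpace ℝ X] (s : Set X) :
    toWeakSpace ℝ X '' s = stmt17wset s := by
  ext x
  constructor
  · rintro ⟨a, ha, rfl⟩; exact ha
  · intro hx; exact ⟨stmt17unweak x, hx, rfl⟩

/-- A closed convex set in a normed real vector space is weakly closed. -/
theorem stmt17isClosed_wset_of_convex {X : Type*} [NormedAddCommGroup X] [NormedSpace ℝ X]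
    {s : Set X} (hs : Convex ℝ s) (hc : IsClosed s) : IsClosed (stmt17wset s) := by
  have h := hs.toWeakSpace_closure (𝕜 := ℝ)
  rw [hc.closure_eq, stmt17wset_image] at h
  rw [← isClosed_closure (s := stmt17wset s) |>.closure_eq] at *
  · exact h ▸ isClosed_closure

/-- In a reflexive real Banach space, closed balls are weakly compact. -/
theorem stmt17weak_isCompact_closedBall {X : Type*} [NormedAddCommGroup X] [NormedSpace ℝ X]
    (hrefl : Function.Surjective (NormedSpace.inclusionInDoubleDual ℝ X)) (R : ℝ) :
    IsCompact (stmt17wset (closedBall (0 : X) R)) := by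
  set e : X ≃ₗᵢ[ℝ] StrongDual ℝ (StrongDual ℝ X) :=
    LinearIsometryEquiv.ofSurjective (NormedSpace.inclusionInDoubleDualLi ℝ (E := X)) hrefl with he
  have hKK : IsCompact (WeakDual.toStrongDual ⁻¹' closedBall (0 : StrongDual ℝ (StrongDual ℝ X)) R) :=
    WeakDual.isCompact_closedBall (x' := 0) (r := R)
  set g : WeakDual ℝ (StrongDual ℝ X) → WeakSpace ℝ X := fun F => (e.symm F : X) with hg
  have hgc : Continuous g := by
    apply WeakBilin.continuous_of_continuous_eval
    intro φ
    have h2 : (fun F : WeakDual ℝ (StrongDual ℝ X) => (topDualPairing ℝ X).flip (g F) φ)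
        = fun F : WeakDual ℝ (StrongDual ℝ X) => F φ := by
      funext F
      show φ (e.symm F) = F φ
      have h3 : e (e.symm F) = F := e.apply_symm_apply F
      calc φ (e.symm F) = (e (e.symm F)) φ := rfl
        _ = F φ := by rw [h3]; rfl
    rw [h2]
    exact WeakDual.eval_continuous φ
  have himg : stmt17wset (closedBall (0 : X) R)
      = g '' (WeakDual.toStrongDual ⁻¹' closedBall (0 : StrongDual ℝ (StrongDual ℝ X)) R) := by
    ext x
    constructor
    · intro hx
      have hx' : ‖stmt17unweak x‖ ≤ R := mem_closedBall_zero_iff.mp (stmt17mem_wset.mp hx)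
      refine ⟨e (stmt17unweak x), ?_, ?_⟩
      · show e (stmt17unweak x) ∈ closedBall (0 : StrongDual ℝ (StrongDual ℝ X)) R
        refine (mem_closedBall_zero_iff (E := StrongDual ℝ (StrongDual ℝ X))).mpr ?_
        rw [e.norm_map]
        exact hx'
      · show (e.symm (e (stmt17unweak x)) : X) = x
        rw [e.symm_apply_apply]
        rfl
    · rintro ⟨F, hF, rfl⟩
      rw [stmt17mem_wset]
      show e.symm (WeakDual.toStrongDual F) ∈ closedBall (0 : X) R
      have hF' : ‖(WeakDual.toStrongDual F : StrongDual ℝ (StrongDual ℝ X))‖ ≤ R :=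
        (mem_closedBall_zero_iff (E := StrongDual ℝ (StrongDual ℝ X))).mp hF
      rw [mem_closedBall_zero_iff, e.symm.norm_map]
      exact hF'
  rw [himg]
  exact hKK.image hgc

/-- If `B` is weakly compact and `ι '' B` has compact closure (in norm), then
`B ∩ ι ⁻¹' T` is weakly closed for every norm-closed `T`. -/
theorem stmt17isClosed_wset_inter_preimage {X E : Type*} [NormedAddCommGroup X] [NormedSpace ℝ X]
    [NormedAddCommGroup E] [NormedSpace ℝ E] (ι : X →L[ℝ] E) {B : Set X}
    (hBw : IsCompact (stmt17wset B))
    (hA : IsCompact (closure (⇑ι '' B)))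
    {T : Set E} (hT : IsClosed T) :
    IsClosed (stmt17wset (B ∩ ⇑ι ⁻¹' T)) := by
  haveI : T2Space (WeakSpace ℝ X) := stmt17weakspace_t2
  haveI : T2Space (WeakSpace ℝ E) := stmt17weakspace_t2
  set A : Set E := closure (⇑ι '' B) with hAdef
  haveI : CompactSpace ↥A := isCompact_iff_compactSpace.mp hA
  -- the equivalence between A (norm topology) and wset A (weak topology)
  set EA : ↥A ≃ ↥(stmt17wset A) :=
    { toFun := fun a => ⟨a.1, a.2⟩
      invFun := fun a => ⟨stmt17unweak a.1, a.2⟩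
      left_inv := fun a => rfl
      right_inv := fun a => rfl } with hEA
  have h0 : Continuous (fun a : ↥A => toWeakSpaceCLM ℝ E a.1) :=
    (toWeakSpaceCLM ℝ E).continuous.comp continuous_subtype_val
  have hEAc : Continuous EA := h0.subtype_mk fun a => a.2
  set homeo := hEAc.homeoOfEquivCompactToT2 with hhomeo
  -- the map from the weak ball into weak A
  have hmem : ∀ y : ↥(stmt17wset B), WeakSpace.map ι y.1 ∈ stmt17wset A := fun y =>
    (subset_closure (mem_image_of_mem ι y.2) : ι (stmt17unweak y.1) ∈ A)
  have h1 : Continuous (fun y : ↥(stmt17wset B) => WeakSpace.map ι y.1) :=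
    (WeakSpace.map ι).continuous.comp continuous_subtype_val
  have hjc : Continuous (fun y : ↥(stmt17wset B) => (⟨WeakSpace.map ι y.1,
      hmem y⟩ : ↥(stmt17wset A))) :=
    h1.subtype_mk hmem
  set k : ↥(stmt17wset B) → E := fun y => (homeo.symm ⟨WeakSpace.map ι y.1,
      hmem y⟩).1 with hk
  have hkc : Continuous k := continuous_subtype_val.comp (homeo.symm.continuous.comp hjc)
  have hkey : ∀ y : ↥(stmt17wset B), k y = ι (stmt17unweak y.1) := by
    intro y
    have : (⟨WeakSpace.map ι y.1, hmem y⟩ : ↥(stmt17wset A))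
        = homeo ⟨ι (stmt17unweak y.1),
          (subset_closure (mem_image_of_mem ι y.2) : ι (stmt17unweak y.1) ∈ A)⟩ := rfl
    rw [hk]
    simp only [this, Homeomorph.symm_apply_apply]
  -- now express the target set
  have himg : stmt17wset (B ∩ ⇑ι ⁻¹' T) = Subtype.val '' (k ⁻¹' T) := by
    ext x
    constructor
    · rintro hx
      rw [stmt17mem_wset] at hx
      refine ⟨⟨x, hx.1⟩, ?_, rfl⟩
      show k ⟨x, hx.1⟩ ∈ T
      rw [hkey]
      exact hx.2
    · rintro ⟨y, hy, rfl⟩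
      rw [stmt17mem_wset]
      refine ⟨y.2, ?_⟩
      show ι (stmt17unweak y.1) ∈ T
      rw [← hkey]
      exact hy
  rw [himg]
  haveI : CompactSpace ↥(stmt17wset B) := isCompact_iff_compactSpace.mp hBw
  exact (((hT.preimage hkc).isCompact).image continuous_subtype_val).isClosed

/-- The constraint set `{‖v‖₀ ≤ K}` is closed in `L¹`. -/
theorem stmt17isClosed_supp_le {Ω : Type*} [MeasurableSpace Ω] (μ : Measure Ω) (K : ℝ≥0∞) :
    IsClosed {v : Lp ℝ 1 μ | μ (Function.support ⇑v) ≤ K} := by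
  refine IsSeqClosed.isClosed (fun v w hv hvw => ?_)
  have hsn : Tendsto (fun n => eLpNorm (⇑(v n) - ⇑w) 1 μ) atTop (𝓝 0) := by
    have hd : Tendsto (fun n => dist (v n) w) atTop (𝓝 0) :=
      tendsto_iff_dist_tendsto_zero.mp hvw
    have heq : ∀ n, eLpNorm (⇑(v n) - ⇑w) 1 μ = ENNReal.ofReal (dist (v n) w) := by
      intro n
      rw [Lp.dist_def, ENNReal.ofReal_toReal]
      rw [← eLpNorm_congr_ae (Lp.coeFn_sub (v n) w)]
      exact (Lp.eLpNorm_lt_top (v n - w)).ne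
    simp only [heq]
    simpa using ENNReal.tendsto_ofReal hd
  have him : TendstoInMeasure μ (fun n => ⇑(v n)) atTop ⇑w :=
    tendstoInMeasure_of_tendsto_eLpNorm_of_ne_top one_ne_zero ENNReal.one_ne_top
      (fun n => Lp.aestronglyMeasurable (v n)) (Lp.aestronglyMeasurable w) hsn
  obtain ⟨ns, hns, hae⟩ := him.exists_seq_tendsto_ae
  set T : ℕ → Set Ω := fun N => ⋂ i, ⋂ (_ : N ≤ i), Function.support ⇑(v (ns i)) with hT
  have hTmono : Monotone T := by
    intro a b hab
    exact fun x hx => mem_iInter₂.2 fun i hi => mem_iInter₂.1 hx i (hab.trans hi)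
  have hsub : Function.support ⇑w ≤ᵐ[μ] ⋃ N, T N := by
    filter_upwards [hae] with x hx hxs
    have hne : w x ≠ 0 := hxs
    have hev : ∀ᶠ i in atTop, v (ns i) x ≠ 0 := by
      have : ∀ᶠ i in atTop, v (ns i) x ∈ {y : ℝ | y ≠ 0} :=
        hx (isOpen_compl_singleton.mem_nhds hne)
      exact this
    obtain ⟨N, hN⟩ := hev.exists_forall_of_atTop
    exact mem_iUnion.2 ⟨N, mem_iInter₂.2 fun i hi => hN i hi⟩
  calc μ (Function.support ⇑w) ≤ μ (⋃ N, T N) := measure_mono_ae hsub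
    _ = ⨆ N, μ (T N) := hTmono.measure_iUnion
    _ ≤ K := by
      refine iSup_le fun N => ?_
      refine le_trans (measure_mono ?_) (hv (ns N))
      exact fun x hx => mem_iInter₂.1 hx N le_rfl

end Stmt17Aux

/-- let `X` be a reflexive Banach space (the inclusion into the double dual
is surjective) compactly embedded into `L¹(Ω)` via `ι`, and let `f : X → ℝ ∪ {+∞}`
(modeled as `EReal`-valued, never `⊥`) be proper, convex, lower semicontinuous, bounded
from below and coercive. If there is a feasible point `u₀` with `f u₀ < ∞` and
`‖u₀‖₀ ≤ K`, then the problem `min f(u) s.t. ‖u‖₀ ≤ K` has a global solution. -/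
theorem stmt17 {Ω : Type*} [MeasurableSpace Ω] (μ : Measure Ω) [SigmaFinite μ]
    {X : Type*} [NormedAddCommGroup X] [NormedSpace ℝ X] [CompleteSpace X]
    (hrefl : Function.Surjective (NormedSpace.inclusionInDoubleDual ℝ X))
    (ι : X →L[ℝ] Lp ℝ 1 μ) (hinj : Function.Injective ι)
    (hcpt : ∀ s : Set X, Bornology.IsBounded s → IsCompact (closure (⇑ι '' s)))
    (f : X → EReal)
    (hbot : ∀ u, f u ≠ ⊥)
    (hconv : ∀ u v : X, ∀ θ : ℝ, 0 ≤ θ → θ ≤ 1 →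
      f (θ • u + (1 - θ) • v) ≤ (θ : EReal) * f u + ((1 - θ : ℝ) : EReal) * f v)
    (hlsc : LowerSemicontinuous f)
    (hbd : ∃ c : ℝ, ∀ u, (c : EReal) ≤ f u)
    (hcoer : ∀ u : ℕ → X, Tendsto (fun n => ‖u n‖) atTop atTop →
      Tendsto (fun n => f (u n)) atTop (𝓝 (⊤ : EReal)))
    (K : ℝ≥0∞) (hK0 : 0 < K) (hK : K < μ Set.univ)
    (u₀ : X) (hu₀ : f u₀ < ⊤) (hu₀K : μ (Function.support (⇑(ι u₀))) ≤ K) :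
    ∃ ustar : X, μ (Function.support (⇑(ι ustar))) ≤ K ∧
      ∀ u : X, μ (Function.support (⇑(ι u))) ≤ K → f ustar ≤ f u := by
  classical
  obtain ⟨c, hc⟩ := hbd
  set r₀ : ℝ := (f u₀).toReal with hr₀
  have hfu₀ : f u₀ = (r₀ : EReal) := (EReal.coe_toReal hu₀.ne (hbot u₀)).symm
  -- coercivity gives a bound on the sublevel set
  have hRex : ∃ R : ℝ, ∀ u : X, f u ≤ (r₀ : EReal) → ‖u‖ ≤ R := by
    by_contra h
    push_neg at h
    choose g hg1 hg2 using h
    have hten : Tendsto (fun n : ℕ => ‖g (n : ℝ)‖) atTop atTop := by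
      refine tendsto_atTop_mono (fun n => (hg2 (n : ℝ)).le) tendsto_natCast_atTop_atTop
    have h2 := hcoer (fun n : ℕ => g (n : ℝ)) hten
    have h3 : ∀ᶠ n : ℕ in atTop, (r₀ : EReal) < f (g (n : ℝ)) :=
      h2 (isOpen_Ioi.mem_nhds (EReal.coe_lt_top r₀))
    obtain ⟨n, hn⟩ := h3.exists
    exact absurd (hg1 (n : ℝ)) (not_le.2 hn)
  obtain ⟨R, hR⟩ := hRex
  -- the pieces of the constraint set
  set Tset : Set (Lp ℝ 1 μ) := {v : Lp ℝ 1 μ | μ (Function.support ⇑v) ≤ K} with hTset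
  set B : Set X := Metric.closedBall (0 : X) R with hB
  -- sublevel sets are convex and closed
  have hsubconv : ∀ t : ℝ, Convex ℝ {u : X | f u ≤ (t : EReal)} := by
    intro t u hu v hv a b ha hb hab
    have hb' : b = 1 - a := by linarith
    have h1 : f (a • u + (1 - a) • v) ≤ (a : EReal) * f u + ((1 - a : ℝ) : EReal) * f v :=
      hconv u v a ha (by linarith)
    have hfu : f u = ((f u).toReal : EReal) :=
      (EReal.coe_toReal (lt_of_le_of_lt hu (EReal.coe_lt_top t)).ne (hbot u)).symm
    have hfv : f v = ((f v).toReal : EReal) :=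
      (EReal.coe_toReal (lt_of_le_of_lt hv (EReal.coe_lt_top t)).ne (hbot v)).symm
    have hu' : f u ≤ (t : EReal) := hu
    have hv' : f v ≤ (t : EReal) := hv
    have hut : (f u).toReal ≤ t := by
      rw [hfu] at hu'; exact EReal.coe_le_coe_iff.mp hu'
    have hvt : (f v).toReal ≤ t := by
      rw [hfv] at hv'; exact EReal.coe_le_coe_iff.mp hv' 
    have key : (a : EReal) * f u + ((1 - a : ℝ) : EReal) * f v
        = ((a * (f u).toReal + (1 - a) * (f v).toReal : ℝ) : EReal) := by
      rw [hfu, hfv, ← EReal.coe_mul, ← EReal.coe_mul, ← EReal.coe_add]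
      simp
    have hle : (a * (f u).toReal + (1 - a) * (f v).toReal : ℝ) ≤ t := by
      have h4 : a * (f u).toReal ≤ a * t := mul_le_mul_of_nonneg_left hut ha
      have h5 : (1 - a) * (f v).toReal ≤ (1 - a) * t :=
        mul_le_mul_of_nonneg_left hvt (by linarith)
      nlinarith
    show f (a • u + b • v) ≤ (t : EReal)
    rw [hb']
    exact h1.trans (key ▸ EReal.coe_le_coe_iff.mpr hle)
  have hsubclosed : ∀ t : ℝ, IsClosed {u : X | f u ≤ (t : EReal)} := by
    intro t
    exact hlsc.isClosed_preimage (t : EReal)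
  have hsubw : ∀ t : ℝ, IsClosed (stmt17wset {u : X | f u ≤ (t : EReal)}) := fun t =>
    stmt17isClosed_wset_of_convex (hsubconv t) (hsubclosed t)
  -- weak compactness of the ball, weak closedness of the constraint piece
  have hBw : IsCompact (stmt17wset B) := stmt17weak_isCompact_closedBall hrefl R
  have hSBw : IsClosed (stmt17wset (B ∩ ⇑ι ⁻¹' Tset)) :=
    stmt17isClosed_wset_inter_preimage ι hBw (hcpt B Metric.isBounded_closedBall)
      (stmt17isClosed_supp_le μ K)
  haveI : T2Space (WeakSpace ℝ X) := stmt17weakspace_t2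
  -- the feasible compact set C
  set C : Set X := (B ∩ ⇑ι ⁻¹' Tset) ∩ {u : X | f u ≤ (r₀ : EReal)} with hC
  have hu₀C : u₀ ∈ C := by
    refine ⟨⟨?_, hu₀K⟩, le_of_eq hfu₀⟩
    exact mem_closedBall_zero_iff.mpr (hR u₀ (le_of_eq hfu₀))
  have hCw : IsCompact (stmt17wset C) := by
    refine hBw.of_isClosed_subset (hSBw.inter (hsubw r₀)) ?_
    exact fun x hx => hx.1.1
  -- the infimum
  set m : EReal := sInf (f '' C) with hm
  have hmle : m ≤ (r₀ : EReal) := by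
    refine sInf_le ⟨u₀, hu₀C, hfu₀⟩
  have hmge : (c : EReal) ≤ m := le_sInf (by rintro x ⟨u, -, rfl⟩; exact hc u)
  have hmtop : m ≠ ⊤ := (lt_of_le_of_lt hmle (EReal.coe_lt_top r₀)).ne
  have hmbot : m ≠ ⊥ := (lt_of_lt_of_le (EReal.bot_lt_coe c) hmge).ne'
  set mr : ℝ := m.toReal with hmr
  have hmeq : m = (mr : EReal) := (EReal.coe_toReal hmtop hmbot).symm
  -- the nested sequence of nonempty weakly compact sets
  set F : ℕ → Set X := fun n => C ∩ {u : X | f u ≤ ((mr + 1 / (n + 1) : ℝ) : EReal)} with hF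
  have hFne : ∀ n, (stmt17wset (F n)).Nonempty := by
    intro n
    have hlt : m < ((mr + 1 / (n + 1) : ℝ) : EReal) := by
      rw [hmeq]
      refine EReal.coe_lt_coe_iff.mpr ?_
      have : (0 : ℝ) < 1 / (n + 1) := by positivity
      linarith
    obtain ⟨x, hx, hxlt⟩ := sInf_lt_iff.mp (hm ▸ hlt)
    obtain ⟨u, huC, rfl⟩ := hx
    exact ⟨u, huC, hxlt.le⟩
  have hFmono : ∀ n, stmt17wset (F (n + 1)) ⊆ stmt17wset (F n) := by
    intro n x hx
    refine ⟨hx.1, le_trans hx.2 (EReal.coe_le_coe_iff.mpr ?_)⟩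
    have : (1 : ℝ) / (n + 1 + 1) ≤ 1 / (n + 1) := by
      apply one_div_le_one_div_of_le
      · positivity
      · push_cast; linarith
    push_cast
    push_cast at this
    linarith
  have hFclosed : ∀ n, IsClosed (stmt17wset (F n)) := by
    intro n
    exact (hSBw.inter (hsubw r₀)).inter (hsubw (mr + 1 / (n + 1)))
  have hFcompact : ∀ n, IsCompact (stmt17wset (F n)) := fun n =>
    hCw.of_isClosed_subset (hFclosed n) (fun x hx => hx.1)
  obtain ⟨xw, hxw⟩ := IsCompact.nonempty_iInter_of_sequence_nonempty_isCompact_isClosed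
    (fun n => stmt17wset (F n)) hFmono hFne (hFcompact 0) hFclosed
  set ustar : X := stmt17unweak xw with hustar
  have hustarF : ∀ n, ustar ∈ F n := fun n => stmt17mem_wset.mp (mem_iInter.mp hxw n)
  have hustarC : ustar ∈ C := (hustarF 0).1
  -- f ustar ≤ m
  have hfm : f ustar ≤ m := by
    have hne_top : f ustar ≠ ⊤ :=
      (lt_of_le_of_lt (hustarF 0).2 (EReal.coe_lt_top _)).ne
    have hfeq : f ustar = ((f ustar).toReal : EReal) :=
      (EReal.coe_toReal hne_top (hbot ustar)).symm
    rw [hfeq, hmeq, EReal.coe_le_coe_iff]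
    refine le_of_forall_pos_le_add fun ε hε => ?_
    obtain ⟨n, hn⟩ := exists_nat_one_div_lt hε
    have h6 : f ustar ≤ ((mr + 1 / (n + 1) : ℝ) : EReal) := (hustarF n).2
    rw [hfeq, EReal.coe_le_coe_iff] at h6
    calc (f ustar).toReal ≤ mr + 1 / (n + 1) := h6
      _ ≤ mr + ε := by linarith
  refine ⟨ustar, hustarC.1.2, ?_⟩
  intro u hu
  by_cases hfu : f u ≤ (r₀ : EReal)
  · have huC : u ∈ C := ⟨⟨mem_closedBall_zero_iff.mpr (hR u hfu), hu⟩, hfu⟩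
    exact hfm.trans (sInf_le ⟨u, huC, rfl⟩)
  · exact (hfm.trans hmle).trans (not_le.mp hfu).le
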